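/- Let k be an integral domain that is finitely generated as a ℤ-algebra, and let M be a maximal ideal of k. Then the residue field k/M is finite. -/

import Mathlib

instance : IsJacobsonRing ℤ := by
  rw [isJacobsonRing_iff_prime_eq]
  intro P hP
  by_cases h : P = ⊥
  · subst h
    refine le_antisymm ?_ Ideal.le_jacobson
    intro x hx
    have hmem : ∀ J : Ideal ℤ, J.IsMaximal → x ∈ J := fun J hJ =>
      Ideal.mem_sInf.mp hx ⟨bot_le, hJ⟩
    by_contra hx0
    have hx0' : x ≠ 0 := fun h => hx0 (h ▸ Submodule.zero_mem _)
    obtain ⟨q, hq, hqp⟩ := Nat.exists_infinite_primes (x.natAbs + 1)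
    have hqZ : Prime (q : ℤ) := Nat.prime_iff_prime_int.mp hqp
    have hmax : (Ideal.span {(q : ℤ)}).IsMaximal :=
      PrincipalIdealRing.isMaximal_of_irreducible hqZ.irreducible
    have hdvd : (q : ℤ) ∣ x := Ideal.mem_span_singleton.mp (hmem _ hmax)
    have : q ∣ x.natAbs := Int.natAbs_dvd_natAbs.mpr (by simpa using hdvd)
    have := Nat.le_of_dvd (Int.natAbs_pos.mpr hx0') this
    omega
  · haveI := hP
    haveI : P.IsMaximal := IsPrime.to_maximal_ideal h
    exact Ideal.jacobson_eq_self_of_isMaximal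

/-- Generalized Nullstellensatz / Artin–Tate: if `k` is an integral domain,
finitely generated as a `ℤ`-algebra, and `M` is a maximal ideal of `k`, then
the residue field `k/M` is finite. -/
theorem stmt_19 (k : Type*) [CommRing k] [IsDomain k] [Algebra.FiniteType ℤ k]
    (M : Ideal k) (hM : M.IsMaximal) :
    Finite (k ⧸ M) := by
  letI : Field (k ⧸ M) := Ideal.Quotient.field M
  haveI hft : Algebra.FiniteType ℤ (k ⧸ M) :=
    Algebra.FiniteType.of_surjective (Ideal.Quotient.mkₐ ℤ M)
      Ideal.Quotient.mk_surjective
  haveI hfin : Module.Finite ℤ (k ⧸ M) :=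
    finite_of_finite_type_of_isJacobsonRing ℤ (k ⧸ M)
  haveI : Algebra.IsIntegral ℤ (k ⧸ M) := Algebra.IsIntegral.of_finite ℤ _
  -- the kernel of `ℤ → k⧸M` is a maximal ideal of `ℤ`
  have hker : (RingHom.ker (algebraMap ℤ (k ⧸ M))).IsMaximal := by
    haveI : (⊥ : Ideal (k ⧸ M)).IsMaximal := Ideal.bot_isMaximal
    have := Ideal.isMaximal_comap_of_isIntegral_of_isMaximal (R := ℤ)
      (S := k ⧸ M) (⊥ : Ideal (k ⧸ M))
    rwa [← RingHom.ker_eq_comap_bot] at this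
  set p := ringChar (k ⧸ M) with hp
  haveI hcp : CharP (k ⧸ M) p := ringChar.charP _
  have hp0 : p ≠ 0 := by
    intro h
    rw [h] at hcp
    haveI : CharZero (k ⧸ M) := CharP.charP_to_charZero _
    have : RingHom.ker (algebraMap ℤ (k ⧸ M)) = ⊥ := by
      rw [RingHom.ker_eq_bot_iff_eq_zero]
      intro x hx
      have : ((x : ℤ) : k ⧸ M) = 0 := by simpa using hx
      exact_mod_cast this
    exact Ring.ne_bot_of_isMaximal_of_not_isField hker Int.not_isField this
  have hpprime : p.Prime := CharP.char_prime_of_ne_zero (k ⧸ M) hp0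
  haveI : Fact p.Prime := ⟨hpprime⟩
  letI : Algebra (ZMod p) (k ⧸ M) := ZMod.algebra _ p
  haveI : IsScalarTower ℤ (ZMod p) (k ⧸ M) :=
    IsScalarTower.of_algebraMap_eq fun x => by
      simp [RingHom.algebraMap_toAlgebra, map_intCast]
  haveI : Module.Finite (ZMod p) (k ⧸ M) :=
    Module.Finite.of_restrictScalars_finite ℤ _ _
  exact Module.finite_of_finite (ZMod p)
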